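/- Let a, b ∈ A be axes with b = (a,b)a + b_0 + b_{1/2}. Then: (a) (b_{1/2}, b_{1/2}) = (b, b_{1/2}) = 2(a,b)(1 − (a,b)); (b) (b, b_0) = (1 − (a,b))^2; (c) b_0·b_0 = (1 − (a,b)) b_0 and (b_{1/2}·b_{1/2})_0 = (a,b) b_0; (d) b_{1/2}·b_{1/2} = (a,b)(1 − (a,b)) a + (a,b) b_0; (e) b_{1/2}·b_0 = (1/2)(1 − (a,b)) b_{1/2}. -/

import Mathlib

/-- `A_0(z)`: the set of elements `x` with `z * x = 0`. -/
def A0 (F : Type*) {A : Type*} [Field F] [NonUnitalNonAssocCommRing A] [Module F A]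
    (z : A) : Set A :=
  {x | z * x = 0}

/-- `A_{1/2}(z)`: the set of elements `x` with `z * x = (1/2) • x`. -/
def Ahalf (F : Type*) {A : Type*} [Field F] [NonUnitalNonAssocCommRing A] [Module F A]
    (z : A) : Set A :=
  {x | z * x = (1/2 : F) • x}

/-- `w0` is the `A_0(a)`-component of `w` in the decomposition
`A = F•a ⊕ A_0(a) ⊕ A_{1/2}(a)`. -/
def IsZeroPart (F : Type*) {A : Type*} [Field F] [NonUnitalNonAssocCommRing A] [Module F A]
    (a w w0 : A) : Prop :=
  w0 ∈ A0 F a ∧ ∃ (α : F) (wh : A), wh ∈ Ahalf F a ∧ w = α • a + w0 + wh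

variable {F A : Type*} [Field F] [NonUnitalNonAssocCommRing A] [Module F A]
  [SMulCommClass F A A] [IsScalarTower F A A]

/-- `c` is a primitive axis of Jordan type `1/2` with respect to the Frobenius form `B`:
`c` is an idempotent of norm `1`, `A = F•c ⊕ A_0(c) ⊕ A_{1/2}(c)` as an internal direct
sum of `F`-subspaces, and the fusion rules hold. -/
structure IsAxis (B : A →ₗ[F] A →ₗ[F] F) (c : A) : Prop where
  idem : c * c = c
  norm : B c c = 1
  decomp : ∀ x : A, ∃ (α : F) (x0 : A), x0 ∈ A0 F c ∧ ∃ xh ∈ Ahalf F c, x = α • c + x0 + xh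
  indep : ∀ (α : F) (x0 xh : A), x0 ∈ A0 F c → xh ∈ Ahalf F c →
      α • c + x0 + xh = 0 → α = 0 ∧ x0 = 0 ∧ xh = 0
  fusion00 : ∀ x ∈ A0 F c, ∀ y ∈ A0 F c, x * y ∈ A0 F c
  fusion0h : ∀ x ∈ A0 F c, ∀ y ∈ Ahalf F c, x * y ∈ Ahalf F c
  fusionhh : ∀ x ∈ Ahalf F c, ∀ y ∈ Ahalf F c, ∃ (α : F) (z : A), z ∈ A0 F c ∧ x * y = α • c + z


private lemma auxB0 (B : A →ₗ[F] A →ₗ[F] F)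
    (hfrob : ∀ x y z : A, B (x * y) z = B x (y * z))
    (c x : A) (hc : c * c = c) (hx : c * x = 0) : B c x = 0 := by
  have h := hfrob c c x
  rw [hc, hx, map_zero] at h
  exact h

private lemma auxBh (B : A →ₗ[F] A →ₗ[F] F)
    (hfrob : ∀ x y z : A, B (x * y) z = B x (y * z))
    (h2 : (2 : F) ≠ 0)
    (c x : A) (hc : c * c = c) (hx : c * x = (1/2 : F) • x) : B c x = 0 := by
  have h := hfrob c c x
  rw [hc, hx, map_smul, smul_eq_mul] at h
  field_simp at h
  linear_combination h

private lemma auxOrth (B : A →ₗ[F] A →ₗ[F] F)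
    (hfrob : ∀ x y z : A, B (x * y) z = B x (y * z))
    (h2 : (2 : F) ≠ 0)
    (c x0 xh : A) (h0 : c * x0 = 0) (hh : c * xh = (1/2 : F) • xh) : B xh x0 = 0 := by
  have h := hfrob xh c x0
  rw [mul_comm xh c, hh, h0, map_zero] at h
  simp only [map_smul, LinearMap.smul_apply, smul_eq_mul] at h
  field_simp at h
  linear_combination h

theorem statement5 (B : A →ₗ[F] A →ₗ[F] F)
    (hsymm : ∀ x y : A, B x y = B y x)
    (hfrob : ∀ x y z : A, B (x * y) z = B x (y * z))
    (h2 : (2 : F) ≠ 0)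
    (a b : A) (ha : IsAxis B a) (hb : IsAxis B b)
    (b0 bh : A) (hb0 : b0 ∈ A0 F a) (hbh : bh ∈ Ahalf F a)
    (hbdec : b = B a b • a + b0 + bh) :
    (B bh bh = 2 * B a b * (1 - B a b) ∧ B b bh = 2 * B a b * (1 - B a b)) ∧
      B b b0 = (1 - B a b) ^ 2 ∧
      (b0 * b0 = (1 - B a b) • b0 ∧ IsZeroPart F a (bh * bh) (B a b • b0)) ∧
      bh * bh = (B a b * (1 - B a b)) • a + B a b • b0 ∧
      bh * b0 = ((1/2 : F) * (1 - B a b)) • bh := by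
  set k := B a b with hk
  have hab0 : a * b0 = 0 := hb0
  have habh : a * bh = (1/2 : F) • bh := hbh
  have hb0a : b0 * a = 0 := by rw [mul_comm]; exact hab0
  have hbha : bh * a = (1/2 : F) • bh := by rw [mul_comm]; exact habh
  obtain ⟨β, z, hz0, hzz⟩ := ha.fusionhh bh hbh bh hbh
  have haz : a * z = 0 := hz0
  have h00 : a * (b0 * b0) = 0 := ha.fusion00 b0 hb0 b0 hb0
  have h0h : a * (b0 * bh) = (1/2 : F) • (b0 * bh) := ha.fusion0h b0 hb0 bh hbh
  -- expansion of b * b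
  have hbsq : b * b = (k * k + β) • a + (b0 * b0 + z) + (k • bh + (2:F) • (b0 * bh)) := by
    conv_lhs => rw [hbdec]
    simp only [mul_add, add_mul, smul_mul_assoc, mul_smul_comm, ha.idem, hab0, habh, hb0a,
      hbha, hzz, smul_zero, add_zero, zero_add, mul_comm bh b0]
    match_scalars <;> field_simp <;> ring
  have hbb : k • a + b0 + bh
      = (k * k + β) • a + (b0 * b0 + z) + (k • bh + (2:F) • (b0 * bh)) := by
    rw [← hbdec, ← hb.idem]; exact hbsq
  have hkey : (k * k + β - k) • a + (b0 * b0 + z - b0)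
      + ((k - 1) • bh + (2:F) • (b0 * bh)) = 0 := by
    linear_combination (norm := match_scalars <;> field_simp <;> ring) -hbb
  have hm0 : b0 * b0 + z - b0 ∈ A0 F a := by
    show a * (b0 * b0 + z - b0) = 0
    rw [mul_sub, mul_add, h00, haz, hab0]; simp
  have hmh : (k - 1) • bh + (2:F) • (b0 * bh) ∈ Ahalf F a := by
    show a * ((k - 1) • bh + (2:F) • (b0 * bh))
      = (1/2 : F) • ((k - 1) • bh + (2:F) • (b0 * bh))
    rw [mul_add, mul_smul_comm, mul_smul_comm, habh, h0h]
    match_scalars <;> field_simp <;> ring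
  obtain ⟨e1, e2, e3⟩ := ha.indep _ _ _ hm0 hmh hkey
  have hβ : β = k * (1 - k) := by linear_combination e1
  have hQ : b0 * bh = ((1/2 : F) * (1 - k)) • bh := by
    linear_combination (norm := match_scalars <;> field_simp <;> ring) (1/2 : F) • e3
  -- products with b
  have hba : b * a = k • a + (1/2:F) • bh := by
    conv_lhs => rw [hbdec]
    simp only [add_mul, smul_mul_assoc, ha.idem, hb0a, hbha]
    match_scalars <;> field_simp <;> ring
  have hbbh : b * bh = β • a + z + (1/2:F) • bh := by
    conv_lhs => rw [hbdec]
    simp only [add_mul, smul_mul_assoc, habh, hzz, hQ]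
    match_scalars <;> field_simp <;> ring
  -- decomposition of a with respect to b
  obtain ⟨γ, a0, ha0, ah, hahm, hadec⟩ := hb.decomp a
  have hba0 : b * a0 = 0 := ha0
  have hbah : b * ah = (1/2:F) • ah := hahm
  have hγ : γ = k := by
    have h1 : B b a = γ := by
      conv_lhs => rw [hadec]
      simp only [map_add, map_smul, smul_eq_mul, hb.norm,
        auxB0 B hfrob b a0 hb.idem hba0, auxBh B hfrob h2 b ah hb.idem hbah]
      ring
    rw [← h1, hsymm b a]
  -- key identity b(ba) = (1/2) ba + (1/2) k b
  have hI : b * (b * a) = (1/2:F) • (b * a) + ((1/2:F) * k) • b := by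
    have h1 : b * a = γ • b + (1/2:F) • ah := by
      conv_lhs => rw [hadec]
      simp only [mul_add, mul_smul_comm, hb.idem, hba0, hbah]
      module
    rw [h1, hγ]
    simp only [mul_add, mul_smul_comm, hb.idem, hbah]
    match_scalars <;> field_simp <;> ring
  have hE : k • (k • a + (1/2:F) • bh) + (1/2:F) • (β • a + z + (1/2:F) • bh)
      = (1/2:F) • (k • a + (1/2:F) • bh) + ((1/2:F) * k) • (k • a + b0 + bh) := by
    have h := hI
    rw [hba, mul_add, mul_smul_comm, mul_smul_comm, hba, hbbh, hbdec] at h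
    exact h
  have hkey2 : (k*k + (1/2:F)*β - (1/2:F)*k - (1/2:F)*k*k) • a
      + ((1/2:F) • z - ((1/2:F)*k) • b0) + ((0:F)) • bh = 0 := by
    linear_combination (norm := match_scalars <;> field_simp <;> ring) hE
  have hm0' : (1/2:F) • z - ((1/2:F)*k) • b0 ∈ A0 F a := by
    show a * ((1/2:F) • z - ((1/2:F)*k) • b0) = 0
    rw [mul_sub, mul_smul_comm, mul_smul_comm, haz, hab0]; simp
  have hmh' : ((0:F)) • bh ∈ Ahalf F a := by
    show a * ((0:F) • bh) = (1/2:F) • ((0:F) • bh)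
    simp
  have hz2 := (ha.indep _ _ _ hm0' hmh' hkey2).2.1
  have hzb0 : z = k • b0 := by
    linear_combination (norm := match_scalars <;> field_simp <;> ring) (2:F) • hz2
  -- bilinear form values
  have hBab0 : B a b0 = 0 := auxB0 B hfrob a b0 ha.idem hab0
  have hBabh : B a bh = 0 := auxBh B hfrob h2 a bh ha.idem habh
  have hBaz : B a z = 0 := auxB0 B hfrob a z ha.idem haz
  have hBbhb0 : B bh b0 = 0 := auxOrth B hfrob h2 a b0 bh hab0 habh
  have hBb0bh : B b0 bh = 0 := by rw [hsymm]; exact hBbhb0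
  have hBb0a : B b0 a = 0 := by rw [hsymm]; exact hBab0
  have hBbha : B bh a = 0 := by rw [hsymm]; exact hBabh
  have hBbhbh : B bh bh = 2 * β := by
    have h := hfrob a bh bh
    rw [habh, hzz] at h
    simp only [map_add, map_smul, LinearMap.smul_apply, smul_eq_mul, ha.norm, hBaz] at h
    field_simp at h
    linear_combination h
  have hBbbh : B b bh = 2 * β := by
    conv_lhs => rw [hbdec]
    simp only [map_add, map_smul, LinearMap.add_apply, LinearMap.smul_apply, smul_eq_mul,
      hBabh, hBb0bh, hBbhbh]
    ring
  have hBbb0 : B b b0 = B b0 b0 := by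
    conv_lhs => rw [hbdec]
    simp only [map_add, map_smul, LinearMap.add_apply, LinearMap.smul_apply, smul_eq_mul,
      hBab0, hBbhb0]
    ring
  have hBnorm : k*k + B b0 b0 + 2*β = 1 := by
    have h := hb.norm
    rw [hbdec] at h
    simp only [map_add, map_smul, LinearMap.add_apply, LinearMap.smul_apply, smul_eq_mul,
      ha.norm, hBab0, hBabh, hBb0a, hBbha, hBb0bh, hBbhb0, hBbhbh] at h
    linear_combination h
  refine ⟨⟨?_, ?_⟩, ?_, ⟨?_, ?_⟩, ?_, ?_⟩
  · linear_combination hBbhbh + 2*hβ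
  · linear_combination hBbbh + 2*hβ
  · linear_combination hBbb0 + hBnorm - 2*hβ
  · linear_combination (norm := match_scalars <;> field_simp <;> ring) e2 - hzb0
  · refine ⟨?_, β, 0, ?_, ?_⟩
    · show a * (k • b0) = 0
      rw [mul_smul_comm, hab0, smul_zero]
    · show a * (0:A) = (1/2:F) • (0:A)
      simp
    · rw [hzz, hzb0, add_zero]
  · rw [hzz, hzb0, hβ]
  · rw [mul_comm]; exact hQ
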